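/- Let j = (j_0,…,j_l) ∈ Σ and set A_1 = ⋃_{0≤r≤l} ⋃_{j_{r−1} < i < j_r} closure(I(j_0,…,j_{r−1},i)) (where for r = 0 the inner union is over all i < j_0), and A_2 = ⋃_{k>l} ⋃_{j_l < i_{l+1} < ⋯ < i_k} closure(I(j_0,…,j_l,i_{l+1},…,i_k)). Then ⋃_{i ≺ j} closure(I(i)) = A_1 ∪ A_2 = A_1 ∪ J(j); in particular ⋃_{i ≺ j} closure(I(i)) is a closed subset of K. -/

import Mathlib

open Set TopologicalSpace

/-- A family of subsets is isolated if each member is disjoint from the closure of the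
union of the other members. -/
def IsIsolatedFamily {K : Type*} [TopologicalSpace K] (ℐ : Set (Set K)) : Prop :=
  ∀ N ∈ ℐ, N ∩ closure (⋃₀ (ℐ \ {N})) = ∅

/-- A regular isolated family: `N = closure N \ closure (⋃ (ℐ \ {N}))` for each member. -/
def IsRegularIsolatedFamily {K : Type*} [TopologicalSpace K] (ℐ : Set (Set K)) : Prop :=
  IsIsolatedFamily ℐ ∧ ∀ N ∈ ℐ, N = closure N \ closure (⋃₀ (ℐ \ {N}))

/-- `Jof F = closure (⋃ F) \ ⋃ F` for a family of sets `F`. -/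
def Jof {K : Type*} [TopologicalSpace K] (F : Set (Set K)) : Set K :=
  closure (⋃₀ F) \ ⋃₀ F

/-- Auxiliary recursion defining the families `𝓘(i_0,…,i_k)`, with the sequence of
indices given in *reverse* order (most recent index first):
`𝓘(i_0,…,i_k,i_{k+1}) = {N ∩ J(i_0,…,i_k) : N ∈ 𝓘(i_{k+1})}`. -/
def famRev {K : Type*} [TopologicalSpace K] (𝓘 : ℕ → Set (Set K)) : List ℕ → Set (Set K)
  | [] => ∅
  | [i] => 𝓘 i
  | i :: j :: l => (fun N => N ∩ Jof (famRev 𝓘 (j :: l))) '' 𝓘 i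

/-- The family `𝓘(i_0,…,i_k)`, the index sequence given in natural order. -/
def fam {K : Type*} [TopologicalSpace K] (𝓘 : ℕ → Set (Set K)) (l : List ℕ) :
    Set (Set K) :=
  famRev 𝓘 l.reverse

/-- The set `I(i_0,…,i_k) = ⋃ 𝓘(i_0,…,i_k)`. -/
def ISet {K : Type*} [TopologicalSpace K] (𝓘 : ℕ → Set (Set K)) (l : List ℕ) : Set K :=
  ⋃₀ fam 𝓘 l

/-- The set `J(i_0,…,i_k) = closure I(i_0,…,i_k) \ I(i_0,…,i_k)`. -/
def JSet {K : Type*} [TopologicalSpace K] (𝓘 : ℕ → Set (Set K)) (l : List ℕ) : Set K :=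
  closure (ISet 𝓘 l) \ ISet 𝓘 l

/-- Membership in `Σ`: nonempty strictly increasing finite sequences of naturals. -/
def SigmaMem (l : List ℕ) : Prop :=
  l ≠ [] ∧ l.Chain' (· < ·)

/-- The total order `≺` on finite sequences: `a ≺ b` iff either they first differ at a
position `r` where `a` is smaller, or `b` is a proper initial segment of `a`. -/
def SLt (a b : List ℕ) : Prop :=
  (∃ (r : ℕ) (x y : ℕ), (∀ s < r, a[s]? = b[s]?) ∧ a[r]? = some x ∧ b[r]? = some y ∧ x < y)
  ∨ (b <+: a ∧ b ≠ a)

section Aux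
variable {K : Type*} [TopologicalSpace K] (𝓘 : ℕ → Set (Set K))

lemma core_closed {F : Set (Set K)} (hF : IsRegularIsolatedFamily F) {P : Set K}
    (hP : IsClosed P) : IsClosed (closure (⋃₀ F ∩ P) \ (⋃₀ F ∩ P)) := by
  set I := ⋃₀ F ∩ P with hIdef
  apply isClosed_of_closure_subset
  intro x hx
  have hxcl : x ∈ closure I := by
    have := closure_mono (diff_subset (s := closure I) (t := I)) hx
    rwa [closure_closure] at this
  refine ⟨hxcl, fun hxI => ?_⟩
  obtain ⟨⟨N, hN, hxN⟩, hxP⟩ := hxI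
  set R := ⋃₀ (F \ {N}) with hRdef
  have hNreg : N = closure N \ closure R := hF.2 N hN
  have hxR : x ∉ closure R := by
    have : x ∈ closure N \ closure R := by rw [← hNreg]; exact hxN
    exact this.2
  set U := (closure R)ᶜ with hUdef
  have hU : IsOpen U := isClosed_closure.isOpen_compl
  have hxU : x ∈ U := hxR
  have hUI : U ∩ I ⊆ N ∩ P := by
    rintro y ⟨hyU, hyI⟩
    rw [hIdef] at hyI
    obtain ⟨⟨N', hN', hyN'⟩, hyP⟩ := hyI
    by_cases h : N' = N
    · exact ⟨h ▸ hyN', hyP⟩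
    · have hyR : y ∈ R := by rw [hRdef]; exact ⟨N', ⟨hN', h⟩, hyN'⟩
      exact absurd (subset_closure hyR) hyU
  have hclM : closure (N ∩ P) ⊆ closure N ∩ P := by
    refine (closure_inter_subset_inter_closure N P).trans ?_
    rw [hP.closure_eq]
  have hstep : U ∩ (closure I \ I) ⊆ closure N \ N := by
    rintro y ⟨hyU, hycl, hyI⟩
    have h1 : y ∈ closure (U ∩ I) := hU.inter_closure ⟨hyU, hycl⟩
    have h2 : y ∈ closure N ∩ P := hclM (closure_mono hUI h1)
    refine ⟨h2.1, fun hyN => hyI ⟨⟨N, hN, hyN⟩, h2.2⟩⟩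
  have hNN : closure N \ N ⊆ closure N ∩ closure R := by
    rintro y ⟨hy1, hy2⟩
    refine ⟨hy1, by_contra fun h => hy2 ?_⟩
    rw [hNreg]; exact ⟨hy1, h⟩
  have hxUJ : x ∈ closure (U ∩ (closure I \ I)) := hU.inter_closure ⟨hxU, hx⟩
  have : x ∈ closure N ∩ closure R := by
    have h3 : closure (U ∩ (closure I \ I)) ⊆ closure N ∩ closure R := by
      refine closure_minimal (hstep.trans hNN) (isClosed_closure.inter isClosed_closure)
    exact h3 hxUJ
  exact hxR this.2

lemma ISet_singleton (i : ℕ) : ISet 𝓘 [i] = ⋃₀ 𝓘 i := rfl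

lemma ISet_append_singleton {l : List ℕ} (hl : l ≠ []) (i : ℕ) :
    ISet 𝓘 (l ++ [i]) = ⋃₀ 𝓘 i ∩ JSet 𝓘 l := by
  obtain ⟨j, t, ht⟩ : ∃ j t, l.reverse = j :: t := by
    cases h : l.reverse with
    | nil => exact absurd (List.reverse_eq_nil_iff.mp h) hl
    | cons j t => exact ⟨j, t, rfl⟩
  have hrev : (l ++ [i]).reverse = i :: j :: t := by
    rw [List.reverse_append, ht]; rfl
  have hJ : Jof (famRev 𝓘 (j :: t)) = JSet 𝓘 l := by
    rw [← ht]; rfl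
  show ⋃₀ famRev 𝓘 (l ++ [i]).reverse = _
  rw [hrev]
  show ⋃₀ ((fun N => N ∩ Jof (famRev 𝓘 (j :: t))) '' 𝓘 i) = _
  rw [hJ]
  ext x
  simp only [mem_sUnion, mem_image, mem_inter_iff]
  constructor
  · rintro ⟨S, ⟨N, hN, rfl⟩, hx1, hx2⟩
    exact ⟨⟨N, hN, hx1⟩, hx2⟩
  · rintro ⟨⟨N, hN, hx1⟩, hx2⟩
    exact ⟨N ∩ JSet 𝓘 l, ⟨N, hN, rfl⟩, hx1, hx2⟩

variable (hreg : ∀ i : ℕ, IsRegularIsolatedFamily (𝓘 i))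
include hreg

lemma JSet_isClosed : ∀ l : List ℕ, l ≠ [] → IsClosed (JSet 𝓘 l) := by
  intro l
  induction l using List.reverseRecOn with
  | nil => exact fun h => absurd rfl h
  | append_singleton l a ih =>
    intro _
    rcases eq_or_ne l [] with rfl | hl'
    · show IsClosed (closure (ISet 𝓘 [a]) \ ISet 𝓘 [a])
      rw [ISet_singleton]
      have : ⋃₀ 𝓘 a = ⋃₀ 𝓘 a ∩ univ := by rw [inter_univ]
      rw [this]
      exact core_closed (hreg a) isClosed_univ
    · show IsClosed (closure (ISet 𝓘 (l ++ [a])) \ ISet 𝓘 (l ++ [a]))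
      rw [ISet_append_singleton 𝓘 hl']
      exact core_closed (hreg a) (ih hl')

lemma closure_ISet_append_subset : ∀ e l : List ℕ, l ≠ [] → e ≠ [] →
    closure (ISet 𝓘 (l ++ e)) ⊆ JSet 𝓘 l := by
  intro e
  induction e using List.reverseRecOn with
  | nil => exact fun l _ he => absurd rfl he
  | append_singleton e i ih =>
    intro l hl _
    rcases eq_or_ne e [] with rfl | he'
    · simp only [List.nil_append]
      have h1 : ISet 𝓘 (l ++ [i]) ⊆ JSet 𝓘 l := by
        rw [ISet_append_singleton 𝓘 hl]; exact inter_subset_right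
      exact closure_minimal h1 (JSet_isClosed 𝓘 hreg l hl)
    · have hle : l ++ e ≠ [] := fun h => hl (List.append_eq_nil_iff.mp h).1
      rw [← List.append_assoc]
      have h1 : ISet 𝓘 ((l ++ e) ++ [i]) ⊆ JSet 𝓘 (l ++ e) := by
        rw [ISet_append_singleton 𝓘 hle]; exact inter_subset_right
      have h2 : closure (ISet 𝓘 ((l ++ e) ++ [i])) ⊆ JSet 𝓘 (l ++ e) :=
        closure_minimal h1 (JSet_isClosed 𝓘 hreg _ hle)
      exact h2.trans (fun x hx => ih l hl he' hx.1)

omit hreg in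
lemma JSet_subset_closure (l : List ℕ) : JSet 𝓘 l ⊆ closure (ISet 𝓘 l) :=
  diff_subset

omit hreg in
lemma take_ne_nil {l : List ℕ} (hl : l ≠ []) {r : ℕ} (hr : 0 < r) : l.take r ≠ [] := by
  rw [Ne, List.take_eq_nil_iff]; push_neg; exact ⟨by omega, hl⟩

end Aux

/-- Lemma 3.2: for `j = (j_0,…,j_l) ∈ Σ`, with
`A₁ = ⋃_{0 ≤ r ≤ l} ⋃_{j_{r-1} < i < j_r} closure I(j_0,…,j_{r-1},i)` and
`A₂ = ⋃_{k > l} ⋃_{j_l < i_{l+1} < ⋯ < i_k} closure I(j_0,…,j_l,i_{l+1},…,i_k)`,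
we have `⋃_{i ≺ j} closure I(i) = A₁ ∪ A₂ = A₁ ∪ J(j)`; in particular
`⋃_{i ≺ j} closure I(i)` is closed. -/
theorem lemma_3_2 {K : Type*} [TopologicalSpace K] (𝓘 : ℕ → Set (Set K))
    (hreg : ∀ i : ℕ, IsRegularIsolatedFamily (𝓘 i))
    (hcover : ⋃₀ (⋃ i : ℕ, 𝓘 i) = Set.univ)
    (jl : List ℕ) (hjl : SigmaMem jl) :
    let lhs : Set K :=
      ⋃₀ {S | ∃ a : List ℕ, SigmaMem a ∧ SLt a jl ∧ S = closure (ISet 𝓘 a)}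
    let A1 : Set K :=
      ⋃₀ {S | ∃ r i : ℕ, r < jl.length ∧ (∀ s < r, jl.getD s 0 < i) ∧
        i < jl.getD r 0 ∧ S = closure (ISet 𝓘 (jl.take r ++ [i]))}
    let A2 : Set K :=
      ⋃₀ {S | ∃ e : List ℕ, e ≠ [] ∧ (jl ++ e).Chain' (· < ·) ∧
        S = closure (ISet 𝓘 (jl ++ e))}
    lhs = A1 ∪ A2 ∧ lhs = A1 ∪ JSet 𝓘 jl ∧ IsClosed lhs := by
  intro lhs A1 A2
  obtain ⟨hjlne, hjlch⟩ := hjl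
  have hpair : jl.Pairwise (· < ·) := List.isChain_iff_pairwise.mp hjlch
  have hL0 : 0 < jl.length := List.length_pos_iff.mpr hjlne
  -- chain' for take r ++ [i]
  have htkch : ∀ r i : ℕ, (∀ s, s < r → jl.getD s 0 < i) →
      List.Chain' (· < ·) (jl.take r ++ [i]) := by
    intro r i hall
    refine List.isChain_iff_pairwise.mpr ?_; rw [List.pairwise_append]
    refine ⟨List.Pairwise.sublist (List.take_sublist r jl) hpair,
      List.pairwise_singleton _ _, ?_⟩
    intro y hy z hz
    simp only [List.mem_singleton] at hz
    subst hz
    obtain ⟨s, hs, hval⟩ := List.mem_iff_getElem.mp hy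
    have hsr : s < r := by
      have := hs; rw [List.length_take] at this; omega
    have hsL : s < jl.length := by
      have := hs; rw [List.length_take] at this; omega
    have hys : jl.getD s 0 = y := by
      rw [List.getD_eq_getElem jl 0 hsL, ← List.getElem_take (h := hs)]; exact hval
    rw [← hys]
    exact hall s hsr
  -- A1 ⊆ lhs
  have hA1lhs : A1 ⊆ lhs := by
    refine sUnion_subset fun S hS => ?_
    obtain ⟨r, i, hr, hall, hir, rfl⟩ := hS
    refine subset_sUnion_of_mem ⟨jl.take r ++ [i], ⟨by simp, htkch r i hall⟩, ?_, rfl⟩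
    have hlen : (jl.take r).length = r := by rw [List.length_take]; omega
    refine Or.inl ⟨r, i, jl.getD r 0, ?_, ?_, ?_, hir⟩
    · intro s hs
      rw [List.getElem?_append_left (by omega), List.getElem?_take, if_pos hs]
    · rw [List.getElem?_append_right (by omega), hlen, Nat.sub_self]; rfl
    · rw [List.getElem?_eq_getElem hr, List.getD_eq_getElem jl 0 hr]
  -- A2 ⊆ lhs
  have hA2lhs : A2 ⊆ lhs := by
    refine sUnion_subset fun S hS => ?_
    obtain ⟨e, he, hch, rfl⟩ := hS
    refine subset_sUnion_of_mem ⟨jl ++ e, ⟨by simp [hjlne], hch⟩, ?_, rfl⟩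
    refine Or.inr ⟨⟨e, rfl⟩, fun h => he ?_⟩
    have := congrArg List.length h
    simp only [List.length_append] at this
    rw [← List.length_eq_zero_iff]; omega
  -- lhs ⊆ A1 ∪ A2
  have hlhssub : lhs ⊆ A1 ∪ A2 := by
    rintro x ⟨S, ⟨a, ⟨hane, hach⟩, hslt, rfl⟩, hxS⟩
    have hapair : a.Pairwise (· < ·) := List.isChain_iff_pairwise.mp hach
    rcases hslt with ⟨r, u, v, hagree, hau, hbv, huv⟩ | ⟨⟨e, heq⟩, hne⟩
    · obtain ⟨hrL, hv⟩ := List.getElem?_eq_some_iff.mp hbv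
      obtain ⟨hra, hu⟩ := List.getElem?_eq_some_iff.mp hau
      have htake : a.take (r+1) = jl.take r ++ [u] := by
        rw [List.take_succ]
        congr 1
        · refine List.ext_getElem? fun n => ?_
          rw [List.getElem?_take, List.getElem?_take]
          by_cases hn : n < r
          · rw [if_pos hn, if_pos hn, hagree n hn]
          · rw [if_neg hn, if_neg hn]
        · rw [List.getElem?_eq_getElem hra, hu]; rfl
      have hsplit : a = (jl.take r ++ [u]) ++ a.drop (r+1) := by
        conv_lhs => rw [← List.take_append_drop (r+1) a]
        rw [htake]
      have hsub : closure (ISet 𝓘 a) ⊆ closure (ISet 𝓘 (jl.take r ++ [u])) := by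
        rcases eq_or_ne (a.drop (r+1)) [] with hd | hd
        · rw [hd, List.append_nil] at hsplit
          rw [hsplit]
        · have h2 := closure_ISet_append_subset 𝓘 hreg (a.drop (r+1))
            (jl.take r ++ [u]) (by simp) hd
          rw [← hsplit] at h2
          exact h2.trans (JSet_subset_closure 𝓘 _)
      have hall : ∀ s, s < r → jl.getD s 0 < u := by
        intro s hs
        have hsa : s < a.length := hs.trans hra
        have h1 : jl[s]? = some (a[s]'hsa) := by
          rw [← hagree s hs]; exact List.getElem?_eq_getElem hsa
        obtain ⟨hsL, hval⟩ := List.getElem?_eq_some_iff.mp h1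
        rw [List.getD_eq_getElem jl 0 hsL, hval]
        have h3 := List.pairwise_iff_getElem.mp hapair s r hsa hra hs
        rwa [hu] at h3
      have hult : u < jl.getD r 0 := by rw [List.getD_eq_getElem jl 0 hrL, hv]; exact huv
      exact Or.inl ⟨_, ⟨r, u, hrL, hall, hult, rfl⟩, hsub hxS⟩
    · subst heq
      have he : e ≠ [] := by rintro rfl; exact hne (by simp)
      exact Or.inr ⟨_, ⟨e, he, hach, rfl⟩, hxS⟩
  -- A2 ⊆ JSet jl
  have hA2J : A2 ⊆ JSet 𝓘 jl := by
    refine sUnion_subset fun S hS => ?_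
    obtain ⟨e, he, hch, rfl⟩ := hS
    exact closure_ISet_append_subset 𝓘 hreg e jl hjlne he
  -- JSet jl ⊆ A1 ∪ A2
  have hJsub : JSet 𝓘 jl ⊆ A1 ∪ A2 := by
    intro x hx
    have hxU : x ∈ ⋃₀ ⋃ i : ℕ, 𝓘 i := by rw [hcover]; trivial
    obtain ⟨N, hN, hxN⟩ := hxU
    obtain ⟨i, hNi⟩ := mem_iUnion.mp hN
    have hxIi : x ∈ ⋃₀ 𝓘 i := ⟨N, hNi, hxN⟩
    have hJtake : ∀ r, 0 < r → r ≤ jl.length → x ∈ JSet 𝓘 (jl.take r) := by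
      intro r hr0 hrL
      rcases eq_or_lt_of_le hrL with heq | hrlt
      · subst heq; rwa [List.take_length]
      · have hd : jl.drop r ≠ [] := by rw [Ne, List.drop_eq_nil_iff]; omega
        have h2 := closure_ISet_append_subset 𝓘 hreg (jl.drop r) (jl.take r)
          (take_ne_nil hjlne hr0) hd
        rw [List.take_append_drop] at h2
        exact h2 hx.1
    have hmemI : ∀ r, r < jl.length → x ∈ ⋃₀ 𝓘 i → x ∈ ISet 𝓘 (jl.take r ++ [i]) := by
      intro r hrL hxi
      rcases Nat.eq_zero_or_pos r with rfl | hr0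
      · rw [List.take_zero, List.nil_append, ISet_singleton]; exact hxi
      · rw [ISet_append_singleton 𝓘 (take_ne_nil hjlne hr0)]
        exact ⟨hxi, hJtake r hr0 hrL.le⟩
    by_cases hlast : jl.getD (jl.length - 1) 0 < i
    · -- goes to A2 with e = [i]
      have hch : (jl ++ [i]).Chain' (· < ·) := by
        refine List.isChain_iff_pairwise.mpr ?_; rw [List.pairwise_append]
        refine ⟨hpair, List.pairwise_singleton _ _, ?_⟩
        intro y hy z hz
        simp only [List.mem_singleton] at hz
        subst hz
        obtain ⟨s, hs, rfl⟩ := List.mem_iff_getElem.mp hy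
        have hsle : s ≤ jl.length - 1 := by omega
        rcases eq_or_lt_of_le hsle with heq | hlt
        · subst heq
          rwa [List.getD_eq_getElem jl 0 (by omega)] at hlast
        · have h3 := List.pairwise_iff_getElem.mp hpair s (jl.length - 1) hs (by omega) hlt
          rw [List.getD_eq_getElem jl 0 (by omega)] at hlast
          omega
      have hx2 : x ∈ ISet 𝓘 (jl ++ [i]) := by
        rw [ISet_append_singleton 𝓘 hjlne]; exact ⟨hxIi, hx⟩
      exact Or.inr ⟨_, ⟨[i], by simp, hch, rfl⟩, subset_closure hx2⟩
    · push_neg at hlast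
      have hex : ∃ r, i ≤ jl.getD r 0 := ⟨jl.length - 1, hlast⟩
      have hrP : i ≤ jl.getD (Nat.find hex) 0 := Nat.find_spec hex
      set r := Nat.find hex with hrdef
      have hrmin : ∀ s, s < r → jl.getD s 0 < i := fun s hs =>
        lt_of_not_ge (Nat.find_min hex hs)
      have hrL : r < jl.length := by
        have : r ≤ jl.length - 1 := Nat.find_min' hex hlast
        omega
      rcases lt_or_eq_of_le hrP with hlt | heqi
      · exact Or.inl ⟨_, ⟨r, i, hrL, hrmin, hlt, rfl⟩,
          subset_closure (hmemI r hrL hxIi)⟩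
      · exfalso
        have htk : jl.take (r+1) = jl.take r ++ [i] := by
          rw [List.take_succ, List.getElem?_eq_getElem hrL]
          rw [List.getD_eq_getElem jl 0 hrL] at heqi
          rw [← heqi]; rfl
        have hxmem : x ∈ ISet 𝓘 (jl.take (r+1)) := by
          rw [htk]; exact hmemI r hrL hxIi
        have hxJ : x ∈ JSet 𝓘 (jl.take (r+1)) := hJtake (r+1) (Nat.succ_pos r) (by omega)
        exact hxJ.2 hxmem
  -- closedness of A1
  have hA1closed : IsClosed A1 := by
    show IsClosed (⋃₀ {S | ∃ r i : ℕ, r < jl.length ∧ (∀ s < r, jl.getD s 0 < i) ∧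
        i < jl.getD r 0 ∧ S = closure (ISet 𝓘 (jl.take r ++ [i]))})
    set T : Set (Set K) := {S | ∃ r i : ℕ, r < jl.length ∧ (∀ s < r, jl.getD s 0 < i) ∧
        i < jl.getD r 0 ∧ S = closure (ISet 𝓘 (jl.take r ++ [i]))} with hT
    have hsubim : T ⊆ (fun p : ℕ × ℕ => closure (ISet 𝓘 (jl.take p.1 ++ [p.2]))) ''
        (Iio jl.length ×ˢ Iio (jl.sum + 1)) := by
      rintro S ⟨r, i, hr, hall, hir, rfl⟩
      refine ⟨(r, i), ⟨hr, ?_⟩, rfl⟩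
      have h1 : jl.getD r 0 ∈ jl := by
        rw [List.getD_eq_getElem jl 0 hr]; exact List.getElem_mem _
      have h2 := List.single_le_sum (l := jl) (fun y _ => Nat.zero_le y) _ h1
      simp only [mem_Iio]
      omega
    have hfin : T.Finite :=
      Set.Finite.subset (Set.Finite.image _ ((finite_Iio _).prod (finite_Iio _))) hsubim
    rw [sUnion_eq_biUnion]
    refine hfin.isClosed_biUnion ?_
    rintro S ⟨r, i, _, _, _, rfl⟩
    exact isClosed_closure
  have hlhs1 : lhs = A1 ∪ A2 :=
    Subset.antisymm hlhssub (union_subset hA1lhs hA2lhs)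
  have hlhs2 : lhs = A1 ∪ JSet 𝓘 jl := by
    refine Subset.antisymm ?_ ?_
    · rw [hlhs1]
      exact union_subset subset_union_left (hA2J.trans subset_union_right)
    · refine union_subset hA1lhs fun x hx => ?_
      rw [hlhs1]; exact hJsub hx
  refine ⟨hlhs1, hlhs2, ?_⟩
  rw [hlhs2]
  exact hA1closed.union (JSet_isClosed 𝓘 hreg jl hjlne)
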